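/- Let G be a metabelian group and z, g ∈ G. Then for all natural numbers m and n one has ⁅z^m, g^n⁆ = ∏_{i=0}^{m-1} ∏_{j=0}^{n-1} (z^{i} g^{j})⁻¹ · ⁅z, g⁆ · (z^{i} g^{j}) (the factors lie in the abelian subgroup G', so the order of the product is irrelevant). -/

import Mathlib

/-- The commutator ⁅a,b⁆ = a⁻¹b⁻¹ab (paper convention). -/
def pcomm {G : Type*} [Group G] (a b : G) : G := a⁻¹ * b⁻¹ * a * b

open scoped commutatorElement in
lemma pcomm_mem {G : Type*} [Group G] (a b : G) : pcomm a b ∈ commutator G := by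
  have h : pcomm a b = ⁅a⁻¹, b⁻¹⁆ := by
    simp [pcomm, commutatorElement_def]
  rw [h]
  exact Subgroup.commutator_mem_commutator (Subgroup.mem_top _) (Subgroup.mem_top _)

lemma pcomm_inner {G : Type*} [Group G] (z g : G) (n : ℕ) :
    pcomm z (g ^ n) =
      ((List.range n).map fun j => (g ^ j)⁻¹ * pcomm z g * g ^ j).prod := by
  induction n with
  | zero => simp [pcomm]
  | succ n ih =>
    rw [List.range_succ, List.map_append, List.prod_append, ← ih]
    simp only [List.map_cons, List.map_nil, List.prod_cons, List.prod_nil, mul_one]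
    rw [pow_succ']
    set h := g ^ n with hh
    simp only [pcomm]
    group

lemma conj_mem' {G : Type*} [Group G] {x : G} (hx : x ∈ commutator G) (c : G) :
    c⁻¹ * x * c ∈ commutator G := by
  have := (Subgroup.commutator_normal (⊤ : Subgroup G) ⊤).conj_mem x hx c⁻¹
  simpa [commutator_def] using this

lemma conj_swap {G : Type*} [Group G]
    (hG : ∀ a b : G, a ∈ commutator G → b ∈ commutator G → a * b = b * a)
    {x : G} (hx : x ∈ commutator G) (a b : G) :
    (a * b)⁻¹ * x * (a * b) = (b * a)⁻¹ * x * (b * a) := by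
  have hc : pcomm a b ∈ commutator G := pcomm_mem a b
  have hy : (b * a)⁻¹ * x * (b * a) ∈ commutator G := conj_mem' hx (b * a)
  have key : (pcomm a b)⁻¹ * ((b * a)⁻¹ * x * (b * a)) * pcomm a b
      = (b * a)⁻¹ * x * (b * a) := by
    rw [show (pcomm a b)⁻¹ * ((b * a)⁻¹ * x * (b * a)) * pcomm a b
        = (pcomm a b)⁻¹ * (((b * a)⁻¹ * x * (b * a)) * pcomm a b) by group,
      hG _ _ hy hc]
    group
  calc (a * b)⁻¹ * x * (a * b)
      = (pcomm a b)⁻¹ * ((b * a)⁻¹ * x * (b * a)) * pcomm a b := by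
        simp only [pcomm]; group
    _ = (b * a)⁻¹ * x * (b * a) := key

lemma conj_prod {G : Type*} [Group G] (c : G) (l : List G) :
    (l.map fun x => c⁻¹ * x * c).prod = c⁻¹ * l.prod * c := by
  induction l with
  | nil => simp
  | cons x xs ih =>
    simp only [List.map_cons, List.prod_cons, ih]
    group

theorem stmt6 {G : Type*} [Group G]
    (hG : ∀ a b : G, a ∈ commutator G → b ∈ commutator G → a * b = b * a)
    (z g : G) (m n : ℕ) :
    pcomm (z ^ m) (g ^ n) =
      ((List.range m).map fun i =>
        ((List.range n).map fun j =>
          (z ^ i * g ^ j)⁻¹ * pcomm z g * (z ^ i * g ^ j)).prod).prod := by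
  induction m with
  | zero => simp [pcomm]
  | succ m ih =>
    rw [List.range_succ, List.map_append, List.prod_append, ← ih]
    simp only [List.map_cons, List.map_nil, List.prod_cons, List.prod_nil, mul_one]
    have hF : ((List.range n).map fun j =>
          (z ^ m * g ^ j)⁻¹ * pcomm z g * (z ^ m * g ^ j)).prod =
        (z ^ m)⁻¹ * pcomm z (g ^ n) * z ^ m := by
      rw [pcomm_inner]
      rw [← conj_prod (z ^ m) ((List.range n).map fun j => (g ^ j)⁻¹ * pcomm z g * g ^ j)]
      rw [List.map_map]
      refine congrArg List.prod (List.map_congr_left ?_)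
      intro j _
      have := conj_swap hG (pcomm_mem z g) (z ^ m) (g ^ j)
      rw [this]
      simp [Function.comp, mul_assoc]
    rw [hF]
    have h1 : pcomm (z ^ m) (g ^ n) ∈ commutator G := pcomm_mem _ _
    have h2 : (z ^ m)⁻¹ * pcomm z (g ^ n) * z ^ m ∈ commutator G := by
      have := (Subgroup.commutator_normal (⊤ : Subgroup G) ⊤).conj_mem
        (pcomm z (g ^ n)) (pcomm_mem z (g ^ n)) (z ^ m)⁻¹
      simpa [commutator_def] using this
    rw [hG _ _ h1 h2]
    rw [pow_succ']
    set a := z ^ m with ha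
    set h := g ^ n with hh
    simp only [pcomm]
    group
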